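/- For the mixture family with τ > 0 whose components satisfy the independence condition: for every z ∈ ℝ^K \ {0} and all θ₁, θ₂ ∈ Θ_τ with |θ₁ − θ₂| ≤ τ/(2√K), (z^T J(θ₁) z)/(z^T J(θ₂) z) ≤ 1 + (2e√K/τ)·|θ₁ − θ₂|. Consequently the mixture family satisfies the local Fisher-information ratio condition (A5) with b̄ = τ/(2√K) and κ = 2e√K/τ. -/

import Mathlib

open MeasureTheory Matrix

noncomputable section

/-- Euclidean norm on `Fin K → ℝ`. -/
def euclNorm {K : ℕ} (v : Fin K → ℝ) : ℝ := Real.sqrt (∑ i, (v i) ^ 2)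

/-- The mixture density `p_θ = θ₀ q₀ + Σ_{i=1}^K θᵢ qᵢ`, where `θ₀ = 1 − Σᵢ θᵢ`. -/
def mixP {K : ℕ} {X : Type*} (q : Fin (K + 1) → X → ℝ) (θ : Fin K → ℝ) (x : X) : ℝ :=
  (1 - ∑ i, θ i) * q 0 x + ∑ i : Fin K, θ i * q i.succ x

/-- The restricted parameter set
`Θ_τ = {θ ∈ [0,1]^K : θᵢ ≥ τ for all i ∈ {0,…,K}}` (with `θ₀ = 1 − Σᵢ θᵢ`). -/
def ThetaTau (K : ℕ) (τ : ℝ) : Set (Fin K → ℝ) :=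
  {θ | (∀ i, 0 ≤ θ i ∧ θ i ≤ 1) ∧ (∀ i, τ ≤ θ i) ∧ τ ≤ 1 - ∑ i, θ i}

/-- Empirical Fisher information of the mixture family (one observation):
`Ĵ_{ij}(θ;x) = (qᵢ(x)−q₀(x))(q_j(x)−q₀(x))/p_θ(x)²`. -/
def mixJhat1 {K : ℕ} {X : Type*} (q : Fin (K + 1) → X → ℝ) (θ : Fin K → ℝ) (x : X) :
    Matrix (Fin K) (Fin K) ℝ :=
  Matrix.of fun i j => (q i.succ x - q 0 x) * (q j.succ x - q 0 x) / (mixP q θ x) ^ 2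

/-- Empirical Fisher information of the mixture family for a sample `x^n`. -/
def mixJhatN {K : ℕ} {X : Type*} (q : Fin (K + 1) → X → ℝ) {n : ℕ} (θ : Fin K → ℝ)
    (xn : Fin n → X) : Matrix (Fin K) (Fin K) ℝ :=
  (n : ℝ)⁻¹ • ∑ t, mixJhat1 q θ (xn t)

/-- Fisher information of the mixture family: `J(θ) = E_{p_θ}[Ĵ(θ;X)]`. -/
def mixJ {K : ℕ} {X : Type*} [MeasurableSpace X] (μ : Measure X)
    (q : Fin (K + 1) → X → ℝ) (θ : Fin K → ℝ) : Matrix (Fin K) (Fin K) ℝ :=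
  Matrix.of fun i j => ∫ x, mixP q θ x * mixJhat1 q θ x i j ∂μ

set_option linter.unusedSectionVars false
set_option maxHeartbeats 1000000

section Aux
variable {K : ℕ} {X : Type*} [MeasurableSpace X] {μ : Measure X}
  {q : Fin (K + 1) → X → ℝ} {τ : ℝ} {θ : Fin K → ℝ}

lemma q_le_S (hq : ∀ i x, 0 ≤ q i x) (i : Fin (K+1)) (x : X) : q i x ≤ ∑ j, q j x :=
  Finset.single_le_sum (fun j _ => hq j x) (Finset.mem_univ i)

lemma abs_u_le_S (hq : ∀ i x, 0 ≤ q i x) (i : Fin K) (x : X) :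
    |q i.succ x - q 0 x| ≤ ∑ j, q j x := by
  rw [abs_sub_le_iff]
  constructor
  · linarith [q_le_S hq i.succ x, hq 0 x]
  · linarith [q_le_S hq 0 x, hq i.succ x]

lemma mixP_lb (hq : ∀ i x, 0 ≤ q i x) (hθ : θ ∈ ThetaTau K τ) (x : X) :
    τ * ∑ j, q j x ≤ mixP q θ x := by
  obtain ⟨h1, h2, h3⟩ := hθ
  rw [Fin.sum_univ_succ, mul_add, Finset.mul_sum]
  refine add_le_add (mul_le_mul_of_nonneg_right h3 (hq 0 x)) ?_
  exact Finset.sum_le_sum fun i _ => mul_le_mul_of_nonneg_right (h2 i) (hq i.succ x)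

lemma mixP_ub (hq : ∀ i x, 0 ≤ q i x) (hθ : θ ∈ ThetaTau K τ) (x : X) :
    mixP q θ x ≤ ∑ j, q j x := by
  obtain ⟨h1, h2, h3⟩ := hθ
  rw [Fin.sum_univ_succ]
  refine add_le_add ?_ ?_
  · have : ∑ i, θ i ≥ 0 := Finset.sum_nonneg fun i _ => (h1 i).1
    nlinarith [hq 0 x]
  · exact Finset.sum_le_sum fun i _ => by nlinarith [(h1 i).2, hq i.succ x]

lemma mixP_nonneg (hq : ∀ i x, 0 ≤ q i x) (hτ : 0 ≤ τ) (hθ : θ ∈ ThetaTau K τ) (x : X) :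
    0 ≤ mixP q θ x :=
  le_trans (mul_nonneg hτ (Finset.sum_nonneg fun j _ => hq j x)) (mixP_lb hq hθ x)

lemma integrable_of_prob (f : X → ℝ) (h : ∫ x, f x ∂μ = 1) : Integrable f μ := by
  by_contra hc
  rw [integral_undef hc] at h
  norm_num at h

lemma mixS_integrable (hq_prob : ∀ i, ∫ x, q i x ∂μ = 1) :
    Integrable (fun x => ∑ j, q j x) μ :=
  integrable_finset_sum _ fun i _ => integrable_of_prob _ (hq_prob i)

lemma mixP_meas (hq : ∀ i, Measurable (q i)) : Measurable (mixP q θ) := by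
  unfold mixP
  exact ((hq 0).const_mul _).add (Finset.measurable_sum _ fun i _ => (hq i.succ).const_mul _)

lemma S_eq_zero (hq : ∀ i x, 0 ≤ q i x) {x : X} (h : ∑ j, q j x = 0) (i : Fin (K+1)) :
    q i x = 0 :=
  le_antisymm (h ▸ q_le_S hq i x) (hq i x)

lemma entry_eq (x : X) (i j : Fin K) :
    mixP q θ x * mixJhat1 q θ x i j
      = (q i.succ x - q 0 x) * (q j.succ x - q 0 x) / mixP q θ x := by
  simp only [mixJhat1, Matrix.of_apply]
  rcases eq_or_ne (mixP q θ x) 0 with h | h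
  · simp [h]
  · field_simp

lemma entry_integrable (hq_meas : ∀ i, Measurable (q i)) (hq : ∀ i x, 0 ≤ q i x)
    (hq_prob : ∀ i, ∫ x, q i x ∂μ = 1) (hτ : 0 < τ) (hθ : θ ∈ ThetaTau K τ) (i j : Fin K) :
    Integrable (fun x => (q i.succ x - q 0 x) * (q j.succ x - q 0 x) / mixP q θ x) μ := by
  refine Integrable.mono' ((mixS_integrable hq_prob).const_mul τ⁻¹) ?_ ?_
  · exact ((((hq_meas i.succ).sub (hq_meas 0)).mul ((hq_meas j.succ).sub (hq_meas 0))).div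
      (mixP_meas hq_meas)).aestronglyMeasurable
  · refine Filter.Eventually.of_forall fun x => ?_
    set S := ∑ j, q j x with hS
    rcases eq_or_lt_of_le (Finset.sum_nonneg fun j _ => hq j x : (0:ℝ) ≤ S) with h0 | h0
    · have := S_eq_zero hq h0.symm
      simp [this, hS ▸ h0.symm, ← hS]
    · have hp := mixP_lb hq hθ x
      have hppos : 0 < mixP q θ x := lt_of_lt_of_le (by positivity) hp
      rw [Real.norm_eq_abs, abs_div, abs_of_pos hppos, div_le_iff₀ hppos]
      have h1 : |(q i.succ x - q 0 x) * (q j.succ x - q 0 x)| ≤ S * S := by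
        rw [abs_mul]
        exact mul_le_mul (abs_u_le_S hq i x) (abs_u_le_S hq j x) (abs_nonneg _) h0.le
      calc |(q i.succ x - q 0 x) * (q j.succ x - q 0 x)| ≤ S * S := h1
        _ = τ⁻¹ * S * (τ * S) := by field_simp
        _ ≤ τ⁻¹ * S * mixP q θ x := by
            refine mul_le_mul_of_nonneg_left hp (by positivity)

lemma sum_sq_div (p : ℝ) (u z : Fin K → ℝ) :
    (∑ i, z i * u i) ^ 2 / p = ∑ i, ∑ j, z i * (u i * u j / p) * z j := by
  rw [pow_two, Finset.sum_mul_sum, Finset.sum_div]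
  refine Finset.sum_congr rfl fun i _ => ?_
  rw [Finset.sum_div]
  refine Finset.sum_congr rfl fun j _ => ?_
  ring

lemma quadform_eq (hq_meas : ∀ i, Measurable (q i)) (hq : ∀ i x, 0 ≤ q i x)
    (hq_prob : ∀ i, ∫ x, q i x ∂μ = 1) (hτ : 0 < τ) (hθ : θ ∈ ThetaTau K τ)
    (z : Fin K → ℝ) :
    z ⬝ᵥ (mixJ μ q θ).mulVec z
      = ∫ x, (∑ i, z i * (q i.succ x - q 0 x)) ^ 2 / mixP q θ x ∂μ := by
  have hint := entry_integrable (μ := μ) hq_meas hq hq_prob hτ hθ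
  have hcalc : z ⬝ᵥ (mixJ μ q θ).mulVec z
      = ∑ i, ∑ j, ∫ x, z i * ((q i.succ x - q 0 x) * (q j.succ x - q 0 x) / mixP q θ x) * z j ∂μ := by
    simp only [dotProduct, Matrix.mulVec, mixJ, Matrix.of_apply]
    refine Finset.sum_congr rfl fun i _ => ?_
    rw [Finset.mul_sum]
    refine Finset.sum_congr rfl fun j _ => ?_
    rw [integral_mul_const, MeasureTheory.integral_const_mul]
    rw [show (∫ x, mixP q θ x * mixJhat1 q θ x i j ∂μ)
        = ∫ x, (q i.succ x - q 0 x) * (q j.succ x - q 0 x) / mixP q θ x ∂μ from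
      integral_congr_ae (Filter.Eventually.of_forall fun x => entry_eq x i j)]
    ring
  rw [hcalc]
  have hswap : ∀ i : Fin K,
      ∑ j, ∫ x, z i * ((q i.succ x - q 0 x) * (q j.succ x - q 0 x) / mixP q θ x) * z j ∂μ
      = ∫ x, ∑ j, z i * ((q i.succ x - q 0 x) * (q j.succ x - q 0 x) / mixP q θ x) * z j ∂μ := by
    intro i
    exact (integral_finset_sum _ fun j _ => ((hint i j).const_mul _).mul_const _).symm
  simp_rw [hswap]
  rw [← integral_finset_sum _ fun i _ =>
    integrable_finset_sum _ fun j _ => ((hint i j).const_mul _).mul_const _]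
  refine integral_congr_ae (Filter.Eventually.of_forall fun x => ?_)
  simp only []
  exact (sum_sq_div _ _ _).symm

lemma gsq_integrable (hq_meas : ∀ i, Measurable (q i)) (hq : ∀ i x, 0 ≤ q i x)
    (hq_prob : ∀ i, ∫ x, q i x ∂μ = 1) (hτ : 0 < τ) (hθ : θ ∈ ThetaTau K τ)
    (z : Fin K → ℝ) :
    Integrable (fun x => (∑ i, z i * (q i.succ x - q 0 x)) ^ 2 / mixP q θ x) μ := by
  have hint := entry_integrable (μ := μ) hq_meas hq hq_prob hτ hθ
  have : (fun x => (∑ i, z i * (q i.succ x - q 0 x)) ^ 2 / mixP q θ x)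
      = fun x => ∑ i, ∑ j,
          z i * ((q i.succ x - q 0 x) * (q j.succ x - q 0 x) / mixP q θ x) * z j := by
    funext x; exact sum_sq_div _ _ _
  rw [this]
  exact integrable_finset_sum _ fun i _ =>
    integrable_finset_sum _ fun j _ => ((hint i j).const_mul _).mul_const _

lemma abs_sum_mul_le (f g : Fin K → ℝ) :
    |∑ i, f i * g i| ≤ Real.sqrt (∑ i, f i ^ 2) * Real.sqrt (∑ i, g i ^ 2) := by
  rw [abs_le]
  refine ⟨?_, Real.sum_mul_le_sqrt_mul_sqrt _ _ _⟩
  have h := Real.sum_mul_le_sqrt_mul_sqrt Finset.univ (fun i => -f i) g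
  have h2 : ∑ i, -f i * g i = -∑ i, f i * g i := by
    rw [← Finset.sum_neg_distrib]
    exact Finset.sum_congr rfl fun i _ => neg_mul _ _
  have h3 : ∑ i, (-f i) ^ 2 = ∑ i, f i ^ 2 := Finset.sum_congr rfl fun i _ => neg_sq _
  rw [h2, h3] at h
  linarith

lemma mixP_compare (hq : ∀ i x, 0 ≤ q i x) (hτ : 0 < τ)
    {θ₁ θ₂ : Fin K → ℝ} (hθ₁ : θ₁ ∈ ThetaTau K τ) (hθ₂ : θ₂ ∈ ThetaTau K τ) (x : X) :
    mixP q θ₂ x ≤ (1 + (Real.sqrt K / τ) * euclNorm (θ₁ - θ₂)) * mixP q θ₁ x := by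
  set S := ∑ j, q j x with hSdef
  have hS0 : 0 ≤ S := Finset.sum_nonneg fun j _ => hq j x
  have hd0 : 0 ≤ euclNorm (θ₁ - θ₂) := Real.sqrt_nonneg _
  have expand : ∀ θ : Fin K → ℝ,
      mixP q θ x = q 0 x + ∑ i, θ i * (q i.succ x - q 0 x) := by
    intro θ
    simp only [mixP, mul_sub]
    rw [Finset.sum_sub_distrib, ← Finset.sum_mul]
    ring
  have hdiff : mixP q θ₂ x - mixP q θ₁ x
      = ∑ i : Fin K, (θ₂ i - θ₁ i) * (q i.succ x - q 0 x) := by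
    rw [expand θ₂, expand θ₁, add_sub_add_left_eq_sub, ← Finset.sum_sub_distrib]
    exact Finset.sum_congr rfl fun i _ => by ring
  have hCS : |∑ i : Fin K, (θ₂ i - θ₁ i) * (q i.succ x - q 0 x)|
      ≤ euclNorm (θ₁ - θ₂) * (Real.sqrt K * S) := by
    have c1 := abs_sum_mul_le (fun i => θ₂ i - θ₁ i) (fun i : Fin K => q i.succ x - q 0 x)
    have c2 : Real.sqrt (∑ i, (θ₂ i - θ₁ i) ^ 2) = euclNorm (θ₁ - θ₂) := by
      unfold euclNorm
      congr 1
      refine Finset.sum_congr rfl fun i _ => ?_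
      simp only [Pi.sub_apply]
      ring
    have c3 : Real.sqrt (∑ i : Fin K, (q i.succ x - q 0 x) ^ 2) ≤ Real.sqrt K * S := by
      have h1 : ∑ i : Fin K, (q i.succ x - q 0 x) ^ 2 ≤ (K : ℝ) * S ^ 2 := by
        have : ∀ i : Fin K, (q i.succ x - q 0 x) ^ 2 ≤ S ^ 2 := by
          intro i
          have h := abs_u_le_S hq i x
          rw [← hSdef] at h
          nlinarith [abs_nonneg (q i.succ x - q 0 x), sq_abs (q i.succ x - q 0 x)]
        calc ∑ i : Fin K, (q i.succ x - q 0 x) ^ 2 ≤ ∑ _i : Fin K, S ^ 2 :=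
              Finset.sum_le_sum fun i _ => this i
          _ = (K : ℝ) * S ^ 2 := by simp [mul_comm]
      calc Real.sqrt (∑ i : Fin K, (q i.succ x - q 0 x) ^ 2)
          ≤ Real.sqrt ((K : ℝ) * S ^ 2) := Real.sqrt_le_sqrt h1
        _ = Real.sqrt K * S := by rw [Real.sqrt_mul (Nat.cast_nonneg K), Real.sqrt_sq hS0]
    calc |∑ i : Fin K, (θ₂ i - θ₁ i) * (q i.succ x - q 0 x)|
        ≤ Real.sqrt (∑ i, (θ₂ i - θ₁ i) ^ 2) * Real.sqrt (∑ i : Fin K, (q i.succ x - q 0 x) ^ 2) := c1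
      _ ≤ euclNorm (θ₁ - θ₂) * (Real.sqrt K * S) := by
          rw [c2]
          exact mul_le_mul_of_nonneg_left c3 hd0
  have hp1 : τ * S ≤ mixP q θ₁ x := mixP_lb hq hθ₁ x
  have habs := (abs_le.mp hCS).2
  rw [← hdiff] at habs
  have hp1nn : 0 ≤ mixP q θ₁ x := mixP_nonneg hq hτ.le hθ₁ x
  have hKnn : (0:ℝ) ≤ Real.sqrt K := Real.sqrt_nonneg _
  have hfin : euclNorm (θ₁ - θ₂) * (Real.sqrt K * S)
      ≤ (Real.sqrt K / τ) * euclNorm (θ₁ - θ₂) * mixP q θ₁ x := by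
    rw [div_mul_eq_mul_div, div_mul_eq_mul_div, le_div_iff₀ hτ]
    nlinarith [mul_nonneg hd0 hKnn]
  nlinarith

end Aux

/-- **Lemma 8.** For the mixture family with `τ > 0` whose components satisfy the
independence condition: for every `z ≠ 0` and all `θ₁, θ₂ ∈ Θ_τ` with
`|θ₁ − θ₂| ≤ τ/(2√K)`,
`(zᵀJ(θ₁)z)/(zᵀJ(θ₂)z) ≤ 1 + (2e√K/τ)|θ₁−θ₂|`.
Consequently the mixture family satisfies the local Fisher-information ratio
condition (A5) with `b̄ = τ/(2√K)` and `κ = 2e√K/τ`. -/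
theorem stmt15 {K : ℕ} {X : Type*} [MeasurableSpace X] (μ : Measure X) [SigmaFinite μ]
    (q : Fin (K + 1) → X → ℝ) (hq_meas : ∀ i, Measurable (q i))
    (hq_nonneg : ∀ i x, 0 ≤ q i x) (hq_prob : ∀ i, ∫ x, q i x ∂μ = 1)
    (τ : ℝ) (hτ : 0 < τ) (hτ' : τ ≤ 1 / (K + 1))
    (hindep : ∀ i : Fin (K + 1),
      0 < sInf {d : ℝ | ∃ w : Fin (K + 1) → ℝ, (∀ j, 0 ≤ w j) ∧ w i = 0 ∧
        (∑ j, w j) = 1 ∧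
        d = ∫ x, q i x * Real.log (q i x / ∑ j, w j * q j x) ∂μ}) :
    ∀ z : Fin K → ℝ, z ≠ 0 →
      ∀ θ₁ ∈ ThetaTau K τ, ∀ θ₂ ∈ ThetaTau K τ,
        euclNorm (θ₁ - θ₂) ≤ τ / (2 * Real.sqrt K) →
          (z ⬝ᵥ (mixJ μ q θ₁).mulVec z) / (z ⬝ᵥ (mixJ μ q θ₂).mulVec z)
            ≤ 1 + (2 * Real.exp 1 * Real.sqrt K / τ) * euclNorm (θ₁ - θ₂) ∧
          z ⬝ᵥ (mixJ μ q θ₁).mulVec z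
            ≤ (1 + (2 * Real.exp 1 * Real.sqrt K / τ) * euclNorm (θ₁ - θ₂)) *
              (z ⬝ᵥ (mixJ μ q θ₂).mulVec z) := by
  intro z hz θ₁ hθ₁ θ₂ hθ₂ hclose
  set d := euclNorm (θ₁ - θ₂) with hddef
  have hd0 : 0 ≤ d := Real.sqrt_nonneg _
  set κ := 2 * Real.exp 1 * Real.sqrt K / τ with hκdef
  have hκ0 : 0 ≤ κ := by positivity
  have hκge : Real.sqrt K / τ ≤ κ := by
    rw [hκdef]
    have h1 : (1:ℝ) ≤ 2 * Real.exp 1 := by nlinarith [Real.exp_one_gt_d9]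
    have : Real.sqrt K ≤ 2 * Real.exp 1 * Real.sqrt K := by
      nlinarith [Real.sqrt_nonneg (K:ℝ)]
    exact div_le_div_of_nonneg_right this hτ.le
  have e1 := quadform_eq (μ := μ) hq_meas hq_nonneg hq_prob hτ hθ₁ z
  have e2 := quadform_eq (μ := μ) hq_meas hq_nonneg hq_prob hτ hθ₂ z
  have hI1 := gsq_integrable (μ := μ) hq_meas hq_nonneg hq_prob hτ hθ₁ z
  have hI2 := gsq_integrable (μ := μ) hq_meas hq_nonneg hq_prob hτ hθ₂ z
  have hpoint : ∀ x, (∑ i, z i * (q i.succ x - q 0 x)) ^ 2 / mixP q θ₁ x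
      ≤ (1 + κ * d) * ((∑ i, z i * (q i.succ x - q 0 x)) ^ 2 / mixP q θ₂ x) := by
    intro x
    set g := ∑ i, z i * (q i.succ x - q 0 x) with hgdef
    have hS0 : 0 ≤ ∑ j, q j x := Finset.sum_nonneg fun j _ => hq_nonneg j x
    rcases eq_or_lt_of_le hS0 with h0 | h0
    · have hp1 : mixP q θ₁ x = 0 :=
        le_antisymm (h0 ▸ mixP_ub hq_nonneg hθ₁ x) (mixP_nonneg hq_nonneg hτ.le hθ₁ x)
      have hp2 : mixP q θ₂ x = 0 :=
        le_antisymm (h0 ▸ mixP_ub hq_nonneg hθ₂ x) (mixP_nonneg hq_nonneg hτ.le hθ₂ x)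
      simp [hp1, hp2]
    · have hp1 : 0 < mixP q θ₁ x := lt_of_lt_of_le (by positivity) (mixP_lb hq_nonneg hθ₁ x)
      have hp2 : 0 < mixP q θ₂ x := lt_of_lt_of_le (by positivity) (mixP_lb hq_nonneg hθ₂ x)
      have hcmp := mixP_compare hq_nonneg hτ hθ₁ hθ₂ x
      have hcmp2 : mixP q θ₂ x ≤ (1 + κ * d) * mixP q θ₁ x := by
        have : (Real.sqrt K / τ) * d ≤ κ * d := mul_le_mul_of_nonneg_right hκge hd0
        nlinarith [hp1.le]
      rw [mul_div_assoc', div_le_div_iff₀ hp1 hp2]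
      nlinarith [sq_nonneg g, hp1.le, mul_le_mul_of_nonneg_left hcmp2 (sq_nonneg g)]
  have hmain : ∫ x, (∑ i, z i * (q i.succ x - q 0 x)) ^ 2 / mixP q θ₁ x ∂μ
      ≤ (1 + κ * d) * ∫ x, (∑ i, z i * (q i.succ x - q 0 x)) ^ 2 / mixP q θ₂ x ∂μ := by
    calc ∫ x, (∑ i, z i * (q i.succ x - q 0 x)) ^ 2 / mixP q θ₁ x ∂μ
        ≤ ∫ x, (1 + κ * d) * ((∑ i, z i * (q i.succ x - q 0 x)) ^ 2 / mixP q θ₂ x) ∂μ :=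
          integral_mono hI1 (hI2.const_mul _) hpoint
      _ = (1 + κ * d) * ∫ x, (∑ i, z i * (q i.succ x - q 0 x)) ^ 2 / mixP q θ₂ x ∂μ :=
          MeasureTheory.integral_const_mul _ _
  have hB0 : 0 ≤ ∫ x, (∑ i, z i * (q i.succ x - q 0 x)) ^ 2 / mixP q θ₂ x ∂μ :=
    integral_nonneg fun x => div_nonneg (sq_nonneg _) (mixP_nonneg hq_nonneg hτ.le hθ₂ x)
  constructor
  · rw [e1, e2]
    rcases eq_or_lt_of_le hB0 with h | h
    · rw [← h, div_zero]
      nlinarith [mul_nonneg hκ0 hd0]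
    · rw [div_le_iff₀ h]
      exact hmain
  · rw [e1, e2]
    exact hmain
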